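/- With the Bedford-McMullen setup and $\tau > 1$, the measure $\underline{p}_d = \left(T_a^{1/\tau - 1}/\sum_{a'\in S} T_{a'}^{1/\tau}\right)_{(a,b)\in Q}$ maximizes the dimension functional $\dim(\underline{p}) = \frac{h(\underline{p}) + (\tau - 1) h_r(\underline{p})}{\log M}$ over all probability vectors $\underline{p}$ on $Q$, and the maximal value is $\frac{\tau \log \sum_{a\in S} T_a^{1/\tau}}{\log M}$. -/
import Mathlib


open Real Finset

/-- Pointwise Gibbs inequality. -/
lemma gibbs_pt {x y : ℝ} (hx : 0 ≤ x) (hy : 0 < y) :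
    x * Real.log y - x * Real.log x ≤ y - x := by
  rcases eq_or_lt_of_le hx with h | h
  · simp [← h]; exact hy.le
  · have h1 := Real.log_le_sub_one_of_pos (div_pos hy h)
    have h2 : x * Real.log (y / x) ≤ x * (y / x - 1) := mul_le_mul_of_nonneg_left h1 h.le
    rw [Real.log_div hy.ne' h.ne'] at h2
    have h3 : x * (y / x - 1) = y - x := by field_simp
    nlinarith [h2]

/-- Gibbs inequality for finite sums. -/
lemma gibbs_sum {ι : Type*} [Fintype ι] (f g : ι → ℝ) (hf : ∀ i, 0 ≤ f i)
    (hg : ∀ i, 0 < g i) (h : ∑ i, f i = ∑ i, g i) :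
    -∑ i, f i * Real.log (f i) ≤ -∑ i, f i * Real.log (g i) := by
  have h1 : ∑ i, (f i * Real.log (g i) - f i * Real.log (f i)) ≤ ∑ i, (g i - f i) :=
    Finset.sum_le_sum fun i _ => gibbs_pt (hf i) (hg i)
  rw [Finset.sum_sub_distrib, Finset.sum_sub_distrib, ← h] at h1
  linarith

/-- The measure `p_d` maximizes the dimension functional
`dim p = (h(p) + (τ-1) h_r(p)) / log M` over the simplex, with maximal value
`τ log (∑_a T_a^{1/τ}) / log M`. -/
theorem stmt9 (S : Type*) [Fintype S] [Nonempty S] (P : S → Type*) [∀ a, Fintype (P a)]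
    [∀ a, Nonempty (P a)] (M N : ℕ) (hN : 2 ≤ N) (hMN : N < M) :
    let τ : ℝ := Real.log M / Real.log N
    let T : S → ℝ := fun a => Fintype.card (P a)
    let pd : (Σ a : S, P a) → ℝ := fun q => T q.1 ^ (1 / τ - 1) / ∑ a' : S, T a' ^ (1 / τ)
    let dimf : ((Σ a : S, P a) → ℝ) → ℝ := fun p =>
      ((-∑ q : (Σ a : S, P a), p q * Real.log (p q)) +
          (τ - 1) * (-∑ a : S, (∑ b : P a, p ⟨a, b⟩) * Real.log (∑ b : P a, p ⟨a, b⟩))) /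
        Real.log M
    (∀ p : (Σ a : S, P a) → ℝ, (∀ q, 0 ≤ p q) → (∑ q : (Σ a : S, P a), p q) = 1 →
        dimf p ≤ dimf pd) ∧
      dimf pd = τ * Real.log (∑ a : S, T a ^ (1 / τ)) / Real.log M := by
  intro τ T pd dimf
  -- basic positivity facts
  have hNpos : (1 : ℝ) < (N : ℝ) := by exact_mod_cast lt_of_lt_of_le one_lt_two (by exact_mod_cast hN)
  have hlogN : 0 < Real.log N := Real.log_pos hNpos
  have hlogNM : Real.log N < Real.log M := Real.log_lt_log (by linarith) (by exact_mod_cast hMN)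
  have hlogM : 0 < Real.log M := lt_trans hlogN hlogNM
  have hτ : 1 < τ := (one_lt_div hlogN).2 hlogNM
  have hτ0 : τ ≠ 0 := by positivity
  have hTpos : ∀ a, 0 < T a := fun a => by
    have h : 0 < Fintype.card (P a) := Fintype.card_pos
    show (0:ℝ) < (Fintype.card (P a) : ℝ)
    exact_mod_cast h
  set c : ℝ := ∑ a' : S, T a' ^ (1 / τ) with hc_def
  have hc : 0 < c := Finset.sum_pos (fun a _ => Real.rpow_pos_of_pos (hTpos a) _) univ_nonempty
  have hpd_pos : ∀ q, 0 < pd q := fun q =>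
    div_pos (Real.rpow_pos_of_pos (hTpos q.1) _) hc
  -- row sums of pd
  have hrow : ∀ a : S, (∑ b : P a, pd ⟨a, b⟩) = T a ^ (1 / τ) / c := by
    intro a
    have e : ∀ b : P a, pd ⟨a, b⟩ = T a ^ (1 / τ - 1) / c := fun b => rfl
    have : (∑ b : P a, pd ⟨a, b⟩) = (Fintype.card (P a) : ℝ) * (T a ^ (1 / τ - 1) / c) := by
      rw [Finset.sum_congr rfl (fun b _ => e b), Finset.sum_const, Finset.card_univ,
        nsmul_eq_mul]
    rw [this]
    have : (Fintype.card (P a) : ℝ) = T a := rfl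
    rw [this, show (1 / τ : ℝ) = 1 + (1 / τ - 1) by ring, Real.rpow_add (hTpos a),
      Real.rpow_one]
    ring
  have hrow_pos : ∀ a : S, 0 < ∑ b : P a, pd ⟨a, b⟩ := fun a => by
    rw [hrow a]; exact div_pos (Real.rpow_pos_of_pos (hTpos a) _) hc
  -- sigma sum decomposition
  have hsigma : ∀ f : (Σ a : S, P a) → ℝ, ∑ q : Σ a : S, P a, f q = ∑ a : S, ∑ b : P a, f ⟨a, b⟩ := by
    intro f; rw [← Finset.univ_sigma_univ, Finset.sum_sigma]
  -- pd is a probability vector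
  have hpd_sum : ∑ q : Σ a : S, P a, pd q = 1 := by
    rw [hsigma]
    simp_rw [hrow]
    rw [← Finset.sum_div, ← hc_def, div_self hc.ne']
  -- logs of pd and its rows
  have hlogpd : ∀ q : Σ a : S, P a, Real.log (pd q) = (1 / τ - 1) * Real.log (T q.1) - Real.log c := by
    intro q
    show Real.log (T q.1 ^ (1 / τ - 1) / c) = _
    rw [Real.log_div (Real.rpow_pos_of_pos (hTpos q.1) _).ne' hc.ne',
      Real.log_rpow (hTpos q.1)]
  have hlogrow : ∀ a : S, Real.log (∑ b : P a, pd ⟨a, b⟩) = (1 / τ) * Real.log (T a) - Real.log c := by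
    intro a
    rw [hrow a, Real.log_div (Real.rpow_pos_of_pos (hTpos a) _).ne' hc.ne',
      Real.log_rpow (hTpos a)]
  -- the "cross entropy" value is the same for any probability vector p
  have hK : ∀ p : (Σ a : S, P a) → ℝ, (∑ q : Σ a : S, P a, p q) = 1 →
      (-∑ q : Σ a : S, P a, p q * Real.log (pd q)) +
        (τ - 1) * (-∑ a : S, (∑ b : P a, p ⟨a, b⟩) * Real.log (∑ b : P a, pd ⟨a, b⟩)) =
      τ * Real.log c := by
    intro p hp1
    have h1 : (∑ q : Σ a : S, P a, p q * Real.log (pd q)) =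
        ∑ a : S, (∑ b : P a, p ⟨a, b⟩) * ((1 / τ - 1) * Real.log (T a) - Real.log c) := by
      rw [hsigma]
      refine Finset.sum_congr rfl fun a _ => ?_
      rw [Finset.sum_mul]
      exact Finset.sum_congr rfl fun b _ => by rw [hlogpd ⟨a, b⟩]
    have h2 : (∑ a : S, (∑ b : P a, p ⟨a, b⟩) * Real.log (∑ b : P a, pd ⟨a, b⟩)) =
        ∑ a : S, (∑ b : P a, p ⟨a, b⟩) * ((1 / τ) * Real.log (T a) - Real.log c) :=
      Finset.sum_congr rfl fun a _ => by rw [hlogrow a]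
    have hp1' : ∑ a : S, ∑ b : P a, p ⟨a, b⟩ = 1 := by rw [← hsigma]; exact hp1
    rw [h1, h2]
    have key : ∀ a : S, -((∑ b : P a, p ⟨a, b⟩) * ((1 / τ - 1) * Real.log (T a) - Real.log c)) +
        (τ - 1) * (-((∑ b : P a, p ⟨a, b⟩) * ((1 / τ) * Real.log (T a) - Real.log c))) =
        (∑ b : P a, p ⟨a, b⟩) * (τ * Real.log c) := by
      intro a
      field_simp
      ring
    calc (-∑ a : S, (∑ b : P a, p ⟨a, b⟩) * ((1 / τ - 1) * Real.log (T a) - Real.log c)) +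
          (τ - 1) * (-∑ a : S, (∑ b : P a, p ⟨a, b⟩) * ((1 / τ) * Real.log (T a) - Real.log c))
        = ∑ a : S, ((-((∑ b : P a, p ⟨a, b⟩) * ((1 / τ - 1) * Real.log (T a) - Real.log c))) +
            (τ - 1) * (-((∑ b : P a, p ⟨a, b⟩) * ((1 / τ) * Real.log (T a) - Real.log c)))) := by
          rw [Finset.sum_add_distrib, ← Finset.sum_neg_distrib, ← Finset.mul_sum,
            ← Finset.sum_neg_distrib]
      _ = ∑ a : S, (∑ b : P a, p ⟨a, b⟩) * (τ * Real.log c) :=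
          Finset.sum_congr rfl fun a _ => key a
      _ = τ * Real.log c := by rw [← Finset.sum_mul, hp1', one_mul]
  -- the value at pd
  have hval : dimf pd = τ * Real.log c / Real.log M := by
    show (_ + _) / Real.log M = _
    rw [hK pd hpd_sum]
  constructor
  · intro p hp0 hp1
    rw [hval]
    have hrow0 : ∀ a : S, 0 ≤ ∑ b : P a, p ⟨a, b⟩ := fun a =>
      Finset.sum_nonneg fun b _ => hp0 ⟨a, b⟩
    have hprow_sum : ∑ a : S, (∑ b : P a, p ⟨a, b⟩) = ∑ a : S, ∑ b : P a, pd ⟨a, b⟩ := by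
      rw [← hsigma, ← hsigma, hp1, hpd_sum]
    -- entropy ≤ cross entropy, full alphabet
    have g1 : -∑ q : Σ a : S, P a, p q * Real.log (p q) ≤
        -∑ q : Σ a : S, P a, p q * Real.log (pd q) :=
      gibbs_sum p pd hp0 hpd_pos (by rw [hp1, hpd_sum])
    -- entropy ≤ cross entropy, rows
    have g2 : -∑ a : S, (∑ b : P a, p ⟨a, b⟩) * Real.log (∑ b : P a, p ⟨a, b⟩) ≤
        -∑ a : S, (∑ b : P a, p ⟨a, b⟩) * Real.log (∑ b : P a, pd ⟨a, b⟩) :=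
      gibbs_sum (fun a => ∑ b : P a, p ⟨a, b⟩) (fun a => ∑ b : P a, pd ⟨a, b⟩)
        hrow0 hrow_pos hprow_sum
    have hτ1 : 0 ≤ τ - 1 := by linarith
    have hnum : (-∑ q : Σ a : S, P a, p q * Real.log (p q)) +
        (τ - 1) * (-∑ a : S, (∑ b : P a, p ⟨a, b⟩) * Real.log (∑ b : P a, p ⟨a, b⟩)) ≤
        τ * Real.log c := by
      calc (-∑ q : Σ a : S, P a, p q * Real.log (p q)) +
            (τ - 1) * (-∑ a : S, (∑ b : P a, p ⟨a, b⟩) * Real.log (∑ b : P a, p ⟨a, b⟩))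
          ≤ (-∑ q : Σ a : S, P a, p q * Real.log (pd q)) +
            (τ - 1) * (-∑ a : S, (∑ b : P a, p ⟨a, b⟩) * Real.log (∑ b : P a, pd ⟨a, b⟩)) := by
            have := mul_le_mul_of_nonneg_left g2 hτ1
            linarith
        _ = τ * Real.log c := hK p hp1
    exact div_le_div_of_nonneg_right hnum hlogM.le |>.trans_eq rfl
  · exact hval
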